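/- arXiv:1610.05976 — 4 statements merged into one kernel-verified Lean document; each statement's English description precedes it below -/
import Mathlib

section
/- Let L ⊂ ℂ_∞ be a discrete 𝔽_q-subvector space. The exponential function e_L(X) = X·∏'_{λ∈L}(1 − X/λ) is 𝔽_q-linear: e_L(a·x + b·y) = a·e_L(x) + b·e_L(y) for all x, y ∈ ℂ_∞ and a, b ∈ 𝔽_q. -/
open Polynomial Filter Finset

section Alg
variable {Fq K : Type*} [Field Fq] [Fintype Fq] [Field K] [Algebra Fq K]

/-- translation invariance of the product over a submodule -/
lemma prod_translate (t : Finset K) (W : Submodule Fq K) (ht : ∀ l, l ∈ t ↔ l ∈ W)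
    {μ : K} (hμ : μ ∈ W) (z : K) :
    ∏ l ∈ t, (z + μ - l) = ∏ l ∈ t, (z - l) := by
  refine Finset.prod_nbij' (fun l => l - μ) (fun l => l + μ) ?_ ?_ ?_ ?_ ?_
  · intro l hl; exact (ht _).2 (W.sub_mem ((ht _).1 hl) hμ)
  · intro l hl; exact (ht _).2 (W.add_mem ((ht _).1 hl) hμ)
  · intro l _; ring
  · intro l _; ring
  · intro l _; ring

lemma prod_root (t : Finset K) (W : Submodule Fq K) (ht : ∀ l, l ∈ t ↔ l ∈ W)
    {μ : K} (hμ : μ ∈ W) : ∏ l ∈ t, (μ - l) = 0 :=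
  Finset.prod_eq_zero ((ht _).2 hμ) (sub_self μ)

lemma prod_additive (t : Finset K) (W : Submodule Fq K) (ht : ∀ l, l ∈ t ↔ l ∈ W)
    (x y : K) :
    ∏ l ∈ t, (x + y - l) = (∏ l ∈ t, (x - l)) + ∏ l ∈ t, (y - l) := by
  classical
  set P : K[X] := ∏ l ∈ t, (X - C l) with hP
  have hPm : P.Monic := monic_prod_of_monic _ _ fun l _ => monic_X_sub_C l
  have hPdeg : P.natDegree = t.card := by
    rw [hP, natDegree_prod_of_monic _ _ fun l _ => monic_X_sub_C l]
    simp
  have hPeval : ∀ z : K, P.eval z = ∏ l ∈ t, (z - l) := by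
    intro z; simp [hP, eval_prod]
  set Q : K[X] := P.comp (X + C y) with hQ
  have hQm : Q.Monic := hPm.comp_X_add_C y
  have hQdeg : Q.natDegree = t.card := by
    rw [hQ, natDegree_comp, natDegree_X_add_C, mul_one, hPdeg]
  have hQeval : ∀ z : K, Q.eval z = ∏ l ∈ t, (z + y - l) := by
    intro z; rw [hQ, eval_comp]; simp [hPeval]
  set g : K[X] := Q - P - C (P.eval y) with hg
  have hcard : 0 < t.card := Finset.card_pos.2 ⟨0, (ht _).2 W.zero_mem⟩
  have hQd : Q.degree = ((t.card : ℕ) : WithBot ℕ) := by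
    rw [Polynomial.degree_eq_natDegree hQm.ne_zero, hQdeg]
  have hPd : P.degree = ((t.card : ℕ) : WithBot ℕ) := by
    rw [Polynomial.degree_eq_natDegree hPm.ne_zero, hPdeg]
  have htc : (0 : WithBot ℕ) < ((t.card : ℕ) : WithBot ℕ) := by
    exact_mod_cast hcard
  have hdeg : g.natDegree < t.card := by
    have h1 : (Q - P).degree < ((t.card : ℕ) : WithBot ℕ) := by
      rcases eq_or_ne Q P with h | h
      · rw [h, sub_self, degree_zero]
        exact lt_of_lt_of_le (WithBot.bot_lt_coe 0) (le_of_lt htc)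
      · have := Polynomial.degree_sub_lt (hQd.trans hPd.symm)
          hQm.ne_zero (by rw [hQm.leadingCoeff, hPm.leadingCoeff])
        rwa [hQd] at this
    have h2 : g.degree < ((t.card : ℕ) : WithBot ℕ) := by
      rw [hg]
      refine lt_of_le_of_lt (degree_sub_le _ _) (max_lt h1 ?_)
      exact lt_of_le_of_lt degree_C_le htc
    rcases eq_or_ne g 0 with h0 | h0
    · rw [h0, natDegree_zero]; exact hcard
    · exact (Polynomial.natDegree_lt_iff_degree_lt h0).2 h2
  have hroots : ∀ μ ∈ t, g.eval μ = 0 := by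
    intro μ hμ
    have hμW : μ ∈ W := (ht _).1 hμ
    have e1 : Q.eval μ = P.eval y := by
      rw [hQeval, hPeval, ← prod_translate t W ht hμW y]
      exact Finset.prod_congr rfl fun l _ => by ring
    have e2 : P.eval μ = 0 := by rw [hPeval]; exact prod_root t W ht hμW
    simp [hg, e1, e2]
  have hg0 : g = 0 := Polynomial.eq_zero_of_natDegree_lt_card_of_eval_eq_zero' g t hroots hdeg
  have hx := congrArg (Polynomial.eval x) hg0
  simp only [hg, eval_sub, eval_C, eval_zero] at hx
  rw [← hPeval x, ← hPeval y, ← hQeval x]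
  linear_combination hx

lemma prod_smul (t : Finset K) (W : Submodule Fq K) (ht : ∀ l, l ∈ t ↔ l ∈ W)
    (a : Fq) (z : K) :
    ∏ l ∈ t, (a • z - l) = a • ∏ l ∈ t, (z - l) := by
  classical
  rcases eq_or_ne a 0 with rfl | ha
  · simp only [zero_smul]
    rw [show (0 : K) = (0:K) + 0 from (zero_add 0).symm] at *
    simpa using prod_root t W ht W.zero_mem
  · have hu : (algebraMap Fq K a) ≠ 0 := by
      simpa using (map_ne_zero (algebraMap Fq K)).2 ha
    have step1 : ∏ l ∈ t, (a • z - l)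
        = (algebraMap Fq K a) ^ t.card * ∏ l ∈ t, (z - a⁻¹ • l) := by
      rw [← Finset.prod_const, ← Finset.prod_mul_distrib]
      refine Finset.prod_congr rfl fun l _ => ?_
      rw [Algebra.smul_def, Algebra.smul_def, map_inv₀]
      field_simp
    have step2 : ∏ l ∈ t, (z - a⁻¹ • l) = ∏ l ∈ t, (z - l) := by
      refine Finset.prod_nbij' (fun l => a⁻¹ • l) (fun l => a • l) ?_ ?_ ?_ ?_ ?_
      · intro l hl; exact (ht _).2 (W.smul_mem _ ((ht _).1 hl))
      · intro l hl; exact (ht _).2 (W.smul_mem _ ((ht _).1 hl))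
      · intro l _; simp [smul_smul, mul_inv_cancel₀ ha]
      · intro l _; simp [smul_smul, inv_mul_cancel₀ ha]
      · intro l _; rfl
    -- card of W is a power of q
    have hWfin : (W : Set K).Finite := Set.Finite.ofFinset t (by simpa using ht)
    have : Fintype W := hWfin.fintype
    have hcard : Fintype.card W = t.card :=
      Fintype.card_of_finset' t fun l => (ht l)
    have hq : (algebraMap Fq K a) ^ t.card = algebraMap Fq K a := by
      rw [← hcard, Module.card_eq_pow_finrank (K := Fq) (V := W), ← map_pow,
        FiniteField.pow_card_pow]
    rw [step1, step2, hq, Algebra.smul_def]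

end Alg

/-- `e` is the lattice exponential of the set `L ⊂ K`: for every `x`,
`e x = x · ∏'_{0 ≠ λ ∈ L} (1 - x/λ)`, the product converging unconditionally. -/
def IsLatticeExp {K : Type*} [NormedField K] (L : Set K) (e : K → K) : Prop :=
  ∀ x : K, ∃ p : K,
    HasProd (fun l : {l : K // l ∈ L ∧ l ≠ 0} => 1 - x / (l : K)) p ∧ e x = x * p

/-- The lattice exponential of a discrete `𝔽_q`-subspace `L ⊂ ℂ_∞` is `𝔽_q`-linear:
`e_L(a·x + b·y) = a·e_L(x) + b·e_L(y)` for all `a, b ∈ 𝔽_q` and `x, y ∈ ℂ_∞`. -/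
theorem stmt3 (Fq K : Type*) [Field Fq] [Fintype Fq]
    [NormedField K] [IsUltrametricDist K] [CompleteSpace K] [Algebra Fq K]
    (L : Submodule Fq K)
    (hdisc : ∀ r : ℝ, {x : K | x ∈ L ∧ ‖x‖ ≤ r}.Finite)
    (eL : K → K) (heL : IsLatticeExp (L : Set K) eL)
    (a b : Fq) (x y : K) :
    eL (a • x + b • y) = a • eL x + b • eL y := by
  classical
  -- the image of a nonzero scalar has norm 1
  have hnorm1 : ∀ c : Fq, c ≠ 0 → ‖algebraMap Fq K c‖ = 1 := by
    intro c hc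
    have h1 : (algebraMap Fq K c) ^ (Fintype.card Fq - 1) = 1 := by
      rw [← map_pow, FiniteField.pow_card_sub_one_eq_one c hc, map_one]
    have h2 := congrArg norm h1
    rw [norm_pow, norm_one] at h2
    have hq : Fintype.card Fq - 1 ≠ 0 := by
      have := Fintype.one_lt_card (α := Fq)
      omega
    rcases lt_trichotomy ‖algebraMap Fq K c‖ 1 with h | h | h
    · have := pow_lt_one₀ (norm_nonneg _) h hq; linarith
    · exact h
    · have := one_lt_pow₀ h hq; linarith
  have hsmul_norm : ∀ (c : Fq) (z : K), ‖c • z‖ ≤ ‖z‖ := by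
    intro c z
    rcases eq_or_ne c 0 with rfl | hc
    · simp
    · rw [Algebra.smul_def, norm_mul, hnorm1 c hc, one_mul]
  -- the finite submodules obtained by intersecting `L` with balls
  set W : ℕ → Submodule Fq K := fun N =>
    { carrier := {z : K | z ∈ L ∧ ‖z‖ ≤ (N : ℝ)}
      add_mem' := by
        rintro u v ⟨huL, hun⟩ ⟨hvL, hvn⟩
        exact ⟨L.add_mem huL hvL,
          le_trans (IsUltrametricDist.norm_add_le_max u v) (max_le hun hvn)⟩
      zero_mem' := ⟨L.zero_mem, by simp⟩
      smul_mem' := by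
        rintro c u ⟨huL, hun⟩
        exact ⟨L.smul_mem c huL, le_trans (hsmul_norm c u) hun⟩ } with hWdef
  have hWmem : ∀ (N : ℕ) (l : K), l ∈ W N ↔ l ∈ L ∧ ‖l‖ ≤ (N : ℝ) := fun N l => Iff.rfl
  -- the index type and the cofinal finite subsets
  set ι := {l : K // l ∈ (L : Set K) ∧ l ≠ 0} with hι
  have hfinι : ∀ N : ℕ, {i : ι | ‖(i : K)‖ ≤ (N : ℝ)}.Finite := by
    intro N
    have hEq : {i : ι | ‖(i : K)‖ ≤ (N : ℝ)}
        = Subtype.val ⁻¹' {z : K | z ∈ L ∧ ‖z‖ ≤ (N : ℝ)} := by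
      ext i
      simp only [Set.mem_setOf_eq, Set.mem_preimage]
      exact ⟨fun h => ⟨i.2.1, h⟩, fun h => h.2⟩
    rw [hEq]
    exact (hdisc N).preimage Subtype.val_injective.injOn
  set t : ℕ → Finset ι := fun N => (hfinι N).toFinset with htdef
  have htmem : ∀ (N : ℕ) (i : ι), i ∈ t N ↔ ‖(i : K)‖ ≤ (N : ℝ) := by
    intro N i; rw [htdef]; exact Set.Finite.mem_toFinset _
  have htmono : Monotone t := by
    intro M N hMN
    show (hfinι M).toFinset ⊆ (hfinι N).toFinset
    refine Set.Finite.toFinset_mono ?_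
    intro i hi
    simp only [Set.mem_setOf_eq] at hi ⊢
    exact le_trans hi (Nat.cast_le.2 hMN)
  have htcof : ∀ i : ι, ∃ N, i ∈ t N := by
    intro i
    exact ⟨⌈‖(i : K)‖⌉₊, (htmem _ _).2 (Nat.le_ceil _)⟩
  have httop : Filter.Tendsto t Filter.atTop Filter.atTop :=
    tendsto_atTop_finset_of_monotone htmono htcof
  -- `eL z` is the limit of the finite products over the balls
  have key : ∀ z : K, Filter.Tendsto (fun N => z * ∏ i ∈ t N, (1 - z / (i : K)))
      Filter.atTop (nhds (eL z)) := by
    intro z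
    obtain ⟨p, hp, hez⟩ := heL z
    have h1 : Filter.Tendsto (fun N => ∏ i ∈ t N, (1 - z / (i : K)))
        Filter.atTop (nhds p) := hp.comp httop
    rw [hez]
    exact h1.const_mul z
  -- finite-level linearity
  have hfl : ∀ N : ℕ,
      (a • x + b • y) * ∏ i ∈ t N, (1 - (a • x + b • y) / (i : K))
      = a • (x * ∏ i ∈ t N, (1 - x / (i : K)))
        + b • (y * ∏ i ∈ t N, (1 - y / (i : K))) := by
    intro N
    set s : Finset K := insert 0 ((t N).image Subtype.val) with hs
    have h0s : (0 : K) ∉ (t N).image Subtype.val := by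
      simp only [Finset.mem_image, not_exists]
      rintro i ⟨hi, hi0⟩
      exact i.2.2 hi0
    have hsW : ∀ l, l ∈ s ↔ l ∈ W N := by
      intro l
      rw [hs, Finset.mem_insert, Finset.mem_image, hWmem]
      constructor
      · rintro (rfl | ⟨i, hi, rfl⟩)
        · exact ⟨L.zero_mem, by simp⟩
        · exact ⟨i.2.1, (htmem _ _).1 hi⟩
      · rintro ⟨hL, hn⟩
        rcases eq_or_ne l 0 with rfl | hl0
        · exact Or.inl rfl
        · exact Or.inr ⟨⟨l, hL, hl0⟩, (htmem _ _).2 hn, rfl⟩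
    set c : K := ∏ i ∈ t N, (-((i : K))⁻¹) with hc
    have bridge : ∀ z : K,
        z * ∏ i ∈ t N, (1 - z / (i : K)) = (∏ l ∈ s, (z - l)) * c := by
      intro z
      have h1 : ∏ i ∈ t N, (1 - z / (i : K))
          = (∏ i ∈ t N, (z - (i : K))) * c := by
        rw [hc, ← Finset.prod_mul_distrib]
        refine Finset.prod_congr rfl fun i _ => ?_
        have hi0 : ((i : K)) ≠ 0 := i.2.2
        field_simp
        ring
      have h2 : ∏ l ∈ s, (z - l) = z * ∏ i ∈ t N, (z - (i : K)) := by
        rw [hs, Finset.prod_insert h0s, sub_zero,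
          Finset.prod_image (fun i _ j _ h => Subtype.val_injective h)]
      rw [h1, h2]; ring
    rw [bridge, bridge, bridge]
    have hadd : ∏ l ∈ s, (a • x + b • y - l)
        = (∏ l ∈ s, (a • x - l)) + ∏ l ∈ s, (b • y - l) :=
      prod_additive s (W N) hsW (a • x) (b • y)
    have hax : ∏ l ∈ s, (a • x - l) = a • ∏ l ∈ s, (x - l) :=
      prod_smul s (W N) hsW a x
    have hby : ∏ l ∈ s, (b • y - l) = b • ∏ l ∈ s, (y - l) :=
      prod_smul s (W N) hsW b y
    rw [hadd, hax, hby, add_mul, smul_mul_assoc, smul_mul_assoc]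
  -- pass to the limit
  have h1 := key (a • x + b • y)
  have h1' := h1.congr hfl
  have h2 : Filter.Tendsto
      (fun N => a • (x * ∏ i ∈ t N, (1 - x / (i : K)))
        + b • (y * ∏ i ∈ t N, (1 - y / (i : K))))
      Filter.atTop (nhds (a • eL x + b • eL y)) := by
    simp only [Algebra.smul_def]
    exact (((key x).const_mul _).add ((key y).const_mul _))
  exact tendsto_nhds_unique h1' h2
end

section
/- Let L ⊂ ℂ_∞ be a discrete 𝔽_q-subvector space. The zero set of the entire function e_L(X) = X·∏'_{λ∈L}(1 − X/λ) is exactly L, and every zero is simple. -/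
open Filter Topology

section Helpers
variable {ι K : Type*} [NormedField K] [IsUltrametricDist K]

omit [IsUltrametricDist K] in
lemma aux_hp_zero {f : ι → K} {a : K} (hf : HasProd f a) {i : ι} (hi : f i = 0) : a = 0 := by
  refine tendsto_nhds_unique hf (Tendsto.congr' ?_ tendsto_const_nhds)
  filter_upwards [Filter.eventually_ge_atTop ({i} : Finset ι)] with s hs
  exact (Finset.prod_eq_zero (hs (Finset.mem_singleton_self i)) hi).symm

omit [IsUltrametricDist K] in
lemma aux_hp_norm {f : ι → K} {a : K} (hf : HasProd f a) (s : Finset ι)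
    (h : ∀ i ∉ s, ‖f i‖ = 1) : ‖a‖ = ‖∏ i ∈ s, f i‖ := by
  classical
  refine tendsto_nhds_unique hf.norm (Tendsto.congr' ?_ tendsto_const_nhds)
  filter_upwards [Filter.eventually_ge_atTop s] with t ht
  rw [norm_prod, ← Finset.prod_sdiff ht,
    Finset.prod_congr (rfl : t \ s = t \ s) (fun i hi => h i (Finset.mem_sdiff.mp hi).2),
    Finset.prod_const_one, one_mul]

omit [IsUltrametricDist K] in
lemma aux_hp_mask [DecidableEq ι] {f : ι → K} {a : K} (hf : HasProd f a) (s : Finset ι)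
    (hs : ∏ i ∈ s, f i ≠ 0) :
    HasProd (fun i => if i ∈ s then 1 else f i) (a / ∏ i ∈ s, f i) := by
  have key : ∀ t : Finset ι, (∏ i ∈ t, (if i ∈ s then 1 else f i))
      = (∏ i ∈ t ∪ s, f i) / ∏ i ∈ s, f i := by
    intro t
    have h1 : (∏ i ∈ t, (if i ∈ s then 1 else f i)) = ∏ i ∈ t \ s, f i := by
      rw [Finset.prod_ite, Finset.prod_const_one, one_mul, Finset.sdiff_eq_filter]
    have h2 : (∏ i ∈ t ∪ s, f i) = (∏ i ∈ t \ s, f i) * ∏ i ∈ s, f i := by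
      rw [← Finset.prod_union (Finset.sdiff_disjoint), Finset.sdiff_union_self_eq_union]
    rw [h1, h2, mul_div_cancel_right₀ _ hs]
  have hmap : Tendsto (fun t : Finset ι => t ∪ s) atTop atTop :=
    tendsto_atTop_atTop.2 fun b => ⟨b, fun t ht => le_trans ht Finset.subset_union_left⟩
  have h3 : Tendsto (fun t : Finset ι => (∏ i ∈ t ∪ s, f i) / ∏ i ∈ s, f i) atTop
      (𝓝 (a / ∏ i ∈ s, f i)) := (hf.comp hmap).div_const _
  exact (tendsto_congr key).2 h3

lemma aux_prod_cmp {u v : ι → K} {δ : ℝ} (hδ0 : 0 ≤ δ) (hδ1 : δ ≤ 1)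
    (hu : ∀ i, ‖u i‖ ≤ 1) (hv : ∀ i, ‖v i - u i‖ ≤ δ) (s : Finset ι) :
    ‖(∏ i ∈ s, v i) - ∏ i ∈ s, u i‖ ≤ δ := by
  classical
  induction s using Finset.induction with
  | empty => simpa using hδ0
  | @insert a s ha ih =>
      rw [Finset.prod_insert ha, Finset.prod_insert ha]
      have hva : ‖v a‖ ≤ 1 := by
        calc ‖v a‖ = ‖u a + (v a - u a)‖ := by ring_nf
          _ ≤ max ‖u a‖ ‖v a - u a‖ := IsUltrametricDist.norm_add_le_max _ _
          _ ≤ 1 := max_le (hu a) (le_trans (hv a) hδ1)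
      have hus : ‖∏ i ∈ s, u i‖ ≤ 1 := by
        rw [norm_prod]
        exact Finset.prod_le_one (fun i _ => norm_nonneg _) (fun i _ => hu i)
      have key : v a * ∏ i ∈ s, v i - u a * ∏ i ∈ s, u i
          = v a * ((∏ i ∈ s, v i) - ∏ i ∈ s, u i) + (v a - u a) * ∏ i ∈ s, u i := by ring
      rw [key]
      refine le_trans (IsUltrametricDist.norm_add_le_max _ _) (max_le ?_ ?_)
      · rw [norm_mul]
        calc ‖v a‖ * ‖(∏ i ∈ s, v i) - ∏ i ∈ s, u i‖ ≤ 1 * δ :=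
              mul_le_mul hva ih (norm_nonneg _) zero_le_one
          _ = δ := one_mul δ
      · rw [norm_mul]
        calc ‖v a - u a‖ * ‖∏ i ∈ s, u i‖ ≤ δ * 1 :=
              mul_le_mul (hv a) hus (norm_nonneg _) hδ0
          _ = δ := mul_one δ

lemma aux_hp_cmp {u v : ι → K} {P P' : K} (hP : HasProd u P) (hP' : HasProd v P')
    {δ : ℝ} (hδ0 : 0 ≤ δ) (hδ1 : δ ≤ 1)
    (hu : ∀ i, ‖u i‖ ≤ 1) (hv : ∀ i, ‖v i - u i‖ ≤ δ) : ‖P' - P‖ ≤ δ := by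
  have h : Tendsto (fun s : Finset ι => ‖(∏ i ∈ s, v i) - ∏ i ∈ s, u i‖) atTop
      (𝓝 ‖P' - P‖) := (hP'.sub hP).norm
  exact le_of_tendsto' h (aux_prod_cmp hδ0 hδ1 hu hv)

-- ‖x - 1‖ < 1 → ‖x‖ = 1
lemma aux_norm_one {x : K} (h : ‖x - 1‖ < 1) : ‖x‖ = 1 := by
  have hne : ‖(1 : K)‖ ≠ ‖x - 1‖ := by rw [norm_one]; exact (ne_of_gt h)
  have : x = 1 + (x - 1) := by ring
  rw [this, IsUltrametricDist.norm_add_eq_max_of_norm_ne_norm hne, norm_one,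
    max_eq_left (le_of_lt h)]

end Helpers



/-- The zero set of the lattice exponential `e_L` of a discrete `𝔽_q`-subspace
`L ⊂ ℂ_∞` is exactly `L`, and every zero is simple (the derivative of `e_L` at each
point of `L` is nonzero). -/
theorem stmt4 (Fq K : Type*) [Field Fq] [Fintype Fq]
    [NontriviallyNormedField K] [IsUltrametricDist K] [CompleteSpace K] [Algebra Fq K]
    (L : Submodule Fq K)
    (hdisc : ∀ r : ℝ, {x : K | x ∈ L ∧ ‖x‖ ≤ r}.Finite)
    (eL : K → K) (heL : IsLatticeExp (L : Set K) eL) :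
    {x : K | eL x = 0} = (L : Set K) ∧
    ∀ l ∈ L, ∃ d : K, d ≠ 0 ∧ HasDerivAt eL d l := by
  classical
  choose p hp hep using heL
  -- the index type
  set I := {c : K // c ∈ (L : Set K) ∧ c ≠ 0} with hI
  -- finiteness of balls in the index type
  have hfin : ∀ r : ℝ, {c : I | ‖(c : K)‖ ≤ r}.Finite := by
    intro r
    have heq : {c : I | ‖(c : K)‖ ≤ r} = Subtype.val ⁻¹' {x : K | x ∈ L ∧ ‖x‖ ≤ r} := by
      ext c; exact ⟨fun h => And.intro c.2.1 h, fun h => And.right h⟩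
    rw [heq]
    exact (hdisc r).preimage Subtype.val_injective.injOn
  -- minimal norm m
  have hm : ∃ m : ℝ, 0 < m ∧ m ≤ 1 ∧ ∀ y : K, y ∈ L → y ≠ 0 → m ≤ ‖y‖ := by
    set F : Finset K := (hdisc 1).toFinset.filter (· ≠ 0) with hF
    by_cases hFne : F.Nonempty
    · set N : Finset ℝ := F.image norm with hN
      have hNne : N.Nonempty := hFne.image _
      refine ⟨min (N.min' hNne) 1, ?_, min_le_right _ _, ?_⟩
      · rcases Finset.mem_image.mp (N.min'_mem hNne) with ⟨y, hy, hyn⟩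
        have hy0 : y ≠ 0 := (Finset.mem_filter.mp hy).2
        simp only [lt_min_iff]
        exact ⟨hyn ▸ norm_pos_iff.mpr hy0, one_pos⟩
      · intro y hy hy0
        by_cases h1 : ‖y‖ ≤ 1
        · have hyF : y ∈ F :=
            Finset.mem_filter.mpr ⟨(hdisc 1).mem_toFinset.mpr ⟨hy, h1⟩, hy0⟩
          exact le_trans (min_le_left _ _) (N.min'_le _ (Finset.mem_image_of_mem _ hyF))
        · exact le_trans (min_le_right _ _) (le_of_not_ge h1)
    · refine ⟨1, one_pos, le_refl 1, fun y hy hy0 => ?_⟩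
      by_contra hc
      exact hFne ⟨y, Finset.mem_filter.mpr
        ⟨(hdisc 1).mem_toFinset.mpr ⟨hy, le_of_not_ge hc⟩, hy0⟩⟩
  obtain ⟨m, hm0, hm1, hmle⟩ := hm
  -- nonzero factors away from L
  have hfac : ∀ x : K, x ∉ L → ∀ c : I, (1 : K) - x / (c : K) ≠ 0 := by
    intro x hx c h0
    have hc0 : (c : K) ≠ 0 := c.2.2
    have hxc : x = (c : K) := by
      have := sub_eq_zero.mp h0
      field_simp at this
      exact this.symm
    exact hx (hxc ▸ c.2.1)
  -- eL vanishes on L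
  have hzero : ∀ x : K, x ∈ L → eL x = 0 := by
    intro x hx
    rcases eq_or_ne x 0 with rfl | hx0
    · rw [hep 0, zero_mul]
    · have hfz : (1 : K) - x / ((⟨x, hx, hx0⟩ : I) : K) = 0 := by
        simp [div_self hx0]
      rw [hep x, aux_hp_zero (hp x) hfz, mul_zero]
  -- eL does not vanish off L
  have hnonzero : ∀ x : K, x ∉ L → eL x ≠ 0 := by
    intro x hx
    have hx0 : x ≠ 0 := fun h => hx (h ▸ L.zero_mem)
    set s : Finset I := (hfin ‖x‖).toFinset with hs
    have hout : ∀ c : I, c ∉ s → ‖(1 : K) - x / (c : K)‖ = 1 := by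
      intro c hc
      have hcx : ‖x‖ < ‖(c : K)‖ :=
        not_le.mp (fun h => hc ((hfin ‖x‖).mem_toFinset.mpr h))
      refine aux_norm_one ?_
      have : (1 : K) - x / (c : K) - 1 = -(x / (c : K)) := by ring
      rw [this, norm_neg, norm_div]
      exact (div_lt_one (lt_of_le_of_lt (norm_nonneg x) hcx)).mpr hcx
    have hpn : ‖p x‖ = ‖∏ c ∈ s, ((1 : K) - x / (c : K))‖ := aux_hp_norm (hp x) s hout
    have hprod : (∏ c ∈ s, ((1 : K) - x / (c : K))) ≠ 0 :=
      Finset.prod_ne_zero_iff.mpr fun c _ => hfac x hx c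
    have hpx : p x ≠ 0 := by
      intro h; rw [h, norm_zero] at hpn
      exact hprod (norm_eq_zero.mp hpn.symm)
    rw [hep x]
    exact mul_ne_zero hx0 hpx
  constructor
  · ext x
    simp only [Set.mem_setOf_eq, SetLike.mem_coe]
    exact ⟨fun h => by by_contra hc; exact hnonzero x hc h, hzero x⟩
  · intro l hl
    rcases eq_or_ne l 0 with rfl | hl0
    · -- derivative at 0 is 1
      refine ⟨1, one_ne_zero, ?_⟩
      rw [hasDerivAt_iff_tendsto_slope]
      have hbound : ∀ y : K, ‖y‖ ≤ m → ‖p y - 1‖ ≤ ‖y‖ / m := by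
        intro y hym
        refine aux_hp_cmp hasProd_one (hp y) (div_nonneg (norm_nonneg y) hm0.le)
          ((div_le_one hm0).mpr hym) (fun c => by simp) (fun c => ?_)
        have he : (1 - y / (c : K)) - 1 = -(y / (c : K)) := by ring
        rw [he, norm_neg, norm_div]
        have hc : m ≤ ‖(c : K)‖ := hmle _ c.2.1 c.2.2
        gcongr
      have hptend : Tendsto (fun y : K => p y) (𝓝[≠] (0 : K)) (𝓝 1) := by
        rw [Metric.tendsto_nhdsWithin_nhds]
        intro ε hε
        refine ⟨min m (ε * m / 2), by positivity, fun y _ hyd => ?_⟩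
        rw [dist_eq_norm] at hyd ⊢
        rw [sub_zero] at hyd
        have h1 : ‖y‖ ≤ m := le_of_lt (lt_of_lt_of_le hyd (min_le_left _ _))
        calc ‖p y - 1‖ ≤ ‖y‖ / m := hbound y h1
          _ < (ε * m / 2) / m :=
              (div_lt_div_iff_of_pos_right hm0).mpr (lt_of_lt_of_le hyd (min_le_right _ _))
          _ = ε / 2 := by field_simp
          _ < ε := by linarith
      refine hptend.congr' ?_
      filter_upwards [self_mem_nhdsWithin] with y hy
      have hy0 : y ≠ (0 : K) := hy
      rw [slope_def_field, hep y, hep 0, zero_mul, sub_zero, sub_zero, mul_comm,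
        mul_div_assoc, div_self hy0, mul_one]
    · -- derivative at l ≠ 0
      have hlL : l ∈ (L : Set K) := hl
      set i₀ : I := ⟨l, hlL, hl0⟩ with hi₀
      set s₁ : Finset I := (hfin ‖l‖).toFinset with hs₁
      have hi₀s : i₀ ∈ s₁ := by
        rw [hs₁, Set.Finite.mem_toFinset]
        exact le_refl ‖l‖
      set r₀ : ℝ := min m ‖l‖ with hr₀
      have hlpos : (0:ℝ) < ‖l‖ := norm_pos_iff.mpr hl0
      have hr₀0 : 0 < r₀ := lt_min hm0 hlpos
      have hr₀m : r₀ ≤ m := min_le_left _ _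
      have hr₀l : r₀ ≤ ‖l‖ := min_le_right _ _
      have hnotin : ∀ h : K, h ≠ 0 → ‖h‖ < r₀ → l + h ∉ L := by
        intro h hh hhr hmem
        have hhL : h ∈ L := by
          have := L.sub_mem hmem hl
          simpa using this
        exact absurd (hmle h hhL hh) (not_le.mpr (lt_of_lt_of_le hhr hr₀m))
      set G : K → I → K := fun h c => if c ∈ s₁ then 1 else 1 - (l + h) / (c : K) with hG
      set Q : K → K := fun h => p (l + h) / ∏ c ∈ s₁, (1 - (l + h) / (c : K)) with hQdef
      have hPine : ∀ h : K, h ≠ 0 → ‖h‖ < r₀ → (∏ c ∈ s₁, (1 - (l + h) / (c : K))) ≠ 0 :=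
        fun h hh hhr => Finset.prod_ne_zero_iff.mpr fun c _ => hfac _ (hnotin h hh hhr) c
      have hQ : ∀ h : K, h ≠ 0 → ‖h‖ < r₀ → HasProd (G h) (Q h) :=
        fun h hh hhr => aux_hp_mask (hp (l + h)) s₁ (hPine h hh hhr)
      have houts : ∀ c : I, c ∉ s₁ → ‖l‖ < ‖(c : K)‖ :=
        fun c hc => not_le.mp fun hle => hc ((hfin ‖l‖).mem_toFinset.mpr hle)
      have hGout : ∀ h : K, ‖h‖ < ‖l‖ → ∀ c ∉ s₁, ‖G h c‖ = 1 := by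
        intro h hh c hc
        simp only [hG, if_neg hc]
        refine aux_norm_one ?_
        have he : (1 : K) - (l + h) / (c : K) - 1 = -((l + h) / (c : K)) := by ring
        rw [he, norm_neg, norm_div]
        refine (div_lt_one (lt_trans hlpos (houts c hc))).mpr ?_
        calc ‖l + h‖ ≤ max ‖l‖ ‖h‖ := IsUltrametricDist.norm_add_le_max _ _
          _ = ‖l‖ := max_eq_left hh.le
          _ < ‖(c : K)‖ := houts c hc
      have hGnorm : ∀ h : K, ‖h‖ < ‖l‖ → ∀ c, ‖G h c‖ ≤ 1 := by
        intro h hh c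
        by_cases hc : c ∈ s₁
        · simp [hG, hc]
        · exact le_of_eq (hGout h hh c hc)
      have hQnorm1 : ∀ h : K, h ≠ 0 → ‖h‖ < r₀ → ‖Q h‖ = 1 := by
        intro h hh hhr
        rw [aux_hp_norm (hQ h hh hhr) s₁
          (fun c hc => hGout h (lt_of_lt_of_le hhr hr₀l) c hc)]
        rw [Finset.prod_congr rfl (fun c hc => if_pos hc), Finset.prod_const_one, norm_one]
      have hQdiff : ∀ h h' : K, h ≠ 0 → ‖h‖ < r₀ → h' ≠ 0 → ‖h'‖ < r₀ →
          ‖Q h' - Q h‖ ≤ max ‖h‖ ‖h'‖ / ‖l‖ := by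
        intro h h' hh hhr hh' hh'r
        have hmax : max ‖h‖ ‖h'‖ < r₀ := max_lt hhr hh'r
        refine aux_hp_cmp (hQ h hh hhr) (hQ h' hh' hh'r)
          (div_nonneg (le_max_iff.mpr (Or.inl (norm_nonneg h))) hlpos.le)
          ((div_le_one hlpos).mpr (le_trans hmax.le hr₀l))
          (hGnorm h (lt_of_lt_of_le hhr hr₀l)) (fun c => ?_)
        by_cases hc : c ∈ s₁
        · simp only [hG, if_pos hc, sub_self, norm_zero]
          positivity
        · simp only [hG, if_neg hc]
          have he : ((1 : K) - (l + h') / (c : K)) - ((1 : K) - (l + h) / (c : K))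
              = (h - h') / (c : K) := by ring
          rw [he, norm_div]
          have h1 : ‖h - h'‖ ≤ max ‖h‖ ‖h'‖ := by
            calc ‖h - h'‖ = ‖h + -h'‖ := by rw [sub_eq_add_neg]
              _ ≤ max ‖h‖ ‖-h'‖ := IsUltrametricDist.norm_add_le_max _ _
              _ = max ‖h‖ ‖h'‖ := by rw [norm_neg]
          have hcpos : (0:ℝ) < ‖(c : K)‖ := lt_trans hlpos (houts c hc)
          calc ‖h - h'‖ / ‖(c : K)‖ ≤ max ‖h‖ ‖h'‖ / ‖(c : K)‖ := by gcongr
            _ ≤ max ‖h‖ ‖h'‖ / ‖l‖ := by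
                gcongr
                exact (houts c hc).le
      -- a null sequence
      obtain ⟨c0, hc0⟩ := NormedField.exists_one_lt_norm (α := K)
      have hc00 : c0 ≠ 0 := by
        rintro rfl; rw [norm_zero] at hc0; linarith
      set w : K := c0⁻¹ with hw
      have hw0 : w ≠ 0 := inv_ne_zero hc00
      have hwpos : 0 < ‖w‖ := norm_pos_iff.mpr hw0
      have hwlt : ‖w‖ < 1 := by
        rw [hw, norm_inv]
        exact inv_lt_one_of_one_lt₀ hc0
      have htend0 : Tendsto (fun n : ℕ => ‖w‖ ^ n) atTop (𝓝 0) :=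
        tendsto_pow_atTop_nhds_zero_of_lt_one hwpos.le hwlt
      obtain ⟨n₀, hn₀⟩ := (htend0.eventually (gt_mem_nhds hr₀0)).exists
      set u : ℕ → K := fun n => w ^ (n₀ + n) with hu
      have hun0 : ∀ n, u n ≠ 0 := fun n => pow_ne_zero _ hw0
      have hunorm : ∀ n, ‖u n‖ = ‖w‖ ^ (n₀ + n) := fun n => norm_pow _ _
      have hanti : ∀ N n, N ≤ n → ‖u n‖ ≤ ‖u N‖ := by
        intro N n hNn
        rw [hunorm, hunorm]
        exact pow_le_pow_of_le_one hwpos.le hwlt.le (by omega)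
      have huleN : ∀ n, ‖u n‖ ≤ ‖w‖ ^ n₀ := by
        intro n
        rw [hunorm]
        exact pow_le_pow_of_le_one hwpos.le hwlt.le (Nat.le_add_right _ _)
      have hur : ∀ n, ‖u n‖ < r₀ := fun n => lt_of_le_of_lt (huleN n) hn₀
      have hshift : Tendsto (fun n : ℕ => n₀ + n) atTop atTop :=
        tendsto_atTop_atTop.2 fun b => ⟨b, fun n hn => le_trans hn (Nat.le_add_left _ _)⟩
      have hulim : Tendsto (fun n => ‖u n‖) atTop (𝓝 0) := by
        have hcomp : Tendsto ((fun k : ℕ => ‖w‖ ^ k) ∘ (fun n : ℕ => n₀ + n)) atTop (𝓝 0) :=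
          htend0.comp hshift
        exact hcomp.congr fun n => (hunorm n).symm
      have hcseq : CauchySeq (fun n => Q (u n)) := by
        refine cauchySeq_of_le_tendsto_0 (fun N => ‖u N‖ / ‖l‖) (fun n m N hn hm => ?_) ?_
        · rw [dist_eq_norm]
          refine le_trans (hQdiff (u m) (u n) (hun0 m) (hur m) (hun0 n) (hur n)) ?_
          have hmx : max ‖u m‖ ‖u n‖ ≤ ‖u N‖ := max_le (hanti N m hm) (hanti N n hn)
          exact (div_le_div_iff_of_pos_right hlpos).mpr hmx
        · simpa using hulim.div_const ‖l‖
      obtain ⟨Q₀, hQ₀⟩ := cauchySeq_tendsto_of_complete hcseq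
      have hQ₀norm : ‖Q₀‖ = 1 := by
        have h1 : Tendsto (fun n => ‖Q (u n)‖) atTop (𝓝 ‖Q₀‖) := hQ₀.norm
        have h2 : (fun n => ‖Q (u n)‖) = fun _ => 1 :=
          funext fun n => hQnorm1 _ (hun0 n) (hur n)
        rw [h2] at h1
        exact tendsto_nhds_unique h1 tendsto_const_nhds
      have hQ₀ne : Q₀ ≠ 0 := by
        intro h; rw [h, norm_zero] at hQ₀norm; linarith
      have hQbound : ∀ h : K, h ≠ 0 → ‖h‖ < r₀ → ‖Q h - Q₀‖ ≤ ‖h‖ / ‖l‖ := by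
        intro h hh hhr
        have h1 : Tendsto (fun n => ‖Q h - Q (u n)‖) atTop (𝓝 ‖Q h - Q₀‖) :=
          (tendsto_const_nhds.sub hQ₀).norm
        refine le_of_tendsto h1 ?_
        have hh0 : (0:ℝ) < ‖h‖ := norm_pos_iff.mpr hh
        filter_upwards [hulim.eventually (ge_mem_nhds hh0)] with n hn
        have hd := hQdiff h (u n) hh hhr (hun0 n) (hur n)
        have : ‖Q h - Q (u n)‖ = ‖Q (u n) - Q h‖ := norm_sub_rev _ _
        rw [this]
        refine le_trans hd ?_
        rw [max_eq_left hn]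
      -- main derivative
      have hP0 : (∏ c ∈ s₁.erase i₀, ((1:K) - l / (c : K))) ≠ 0 := by
        refine Finset.prod_ne_zero_iff.mpr fun c hc => ?_
        have hcne : c ≠ i₀ := (Finset.mem_erase.mp hc).1
        intro h0
        have hc0 : (c : K) ≠ 0 := c.2.2
        have h1 : l = (c : K) := by
          have h2 := sub_eq_zero.mp h0
          field_simp at h2
          exact h2.symm
        exact hcne (Subtype.ext h1.symm)
      refine ⟨-(Q₀ * ∏ c ∈ s₁.erase i₀, ((1:K) - l / (c : K))),
        neg_ne_zero.mpr (mul_ne_zero hQ₀ne hP0), ?_⟩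
      rw [hasDerivAt_iff_tendsto_slope]
      set P : K → K := fun y => ∏ c ∈ s₁.erase i₀, ((1:K) - y / (c : K)) with hPdef
      set T : K → K := fun y => -(y / l) * Q (y - l) * P y with hT
      have hTeq : T =ᶠ[𝓝[≠] l] slope eL l := by
        filter_upwards [self_mem_nhdsWithin,
          mem_nhdsWithin_of_mem_nhds (Metric.ball_mem_nhds l hr₀0)] with y hy hball
        have hyl : y - l ≠ 0 := sub_ne_zero.mpr hy
        have hylr : ‖y - l‖ < r₀ := by
          rw [← dist_eq_norm]; exact Metric.mem_ball.mp hball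
        have hy' : l + (y - l) = y := by ring
        have hpy : p y = Q (y - l) * ∏ c ∈ s₁, ((1:K) - y / (c : K)) := by
          have := hPine (y - l) hyl hylr
          rw [hy'] at this
          rw [hQdef]
          simp only [hy']
          rw [div_mul_cancel₀ _ this]
        have hsplit : (∏ c ∈ s₁, ((1:K) - y / (c : K)))
            = ((1:K) - y / l) * P y := by
          rw [hPdef, ← Finset.mul_prod_erase s₁ _ hi₀s]
        rw [slope_def_field, hep y, hzero l hl, sub_zero, hpy, hsplit, hT]
        have hfactor : (1:K) - y / l = -(y - l) / l := by
          field_simp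
          ring
        rw [hfactor]
        field_simp
      have hA : Tendsto (fun y : K => -(y / l)) (𝓝[≠] l) (𝓝 (-(l / l))) := by
        refine Tendsto.mono_left ?_ nhdsWithin_le_nhds
        exact ((continuous_id.div_const l).neg).tendsto l
      have hB : Tendsto (fun y : K => Q (y - l)) (𝓝[≠] l) (𝓝 Q₀) := by
        rw [Metric.tendsto_nhdsWithin_nhds]
        intro ε hε
        refine ⟨min r₀ (ε * ‖l‖ / 2), by positivity, fun y hy hyd => ?_⟩
        rw [dist_eq_norm] at hyd ⊢
        have hyl : y - l ≠ 0 := sub_ne_zero.mpr hy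
        have h1 : ‖y - l‖ < r₀ := lt_of_lt_of_le hyd (min_le_left _ _)
        calc ‖Q (y - l) - Q₀‖ ≤ ‖y - l‖ / ‖l‖ := hQbound _ hyl h1
          _ < (ε * ‖l‖ / 2) / ‖l‖ :=
              (div_lt_div_iff_of_pos_right hlpos).mpr
                (lt_of_lt_of_le hyd (min_le_right _ _))
          _ = ε / 2 := by field_simp
          _ < ε := by linarith
      have hC : Tendsto P (𝓝[≠] l) (𝓝 (P l)) := by
        refine Tendsto.mono_left ?_ nhdsWithin_le_nhds
        refine Continuous.tendsto ?_ l
        exact continuous_finset_prod _ fun c _ =>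
          continuous_const.sub (continuous_id.div_const _)
      have hTtend : Tendsto T (𝓝[≠] l) (𝓝 (-(l / l) * Q₀ * P l)) := (hA.mul hB).mul hC
      have hval : -(l / l) * Q₀ * P l = -(Q₀ * P l) := by
        rw [div_self hl0]; ring
      rw [hval] at hTtend
      exact hTtend.congr' hTeq
end

section
/- Let L be a discrete A-module in ℂ_∞ of rank r (i.e. L is a free A-module of rank r that is discrete in ℂ_∞), and for nonzero a ∈ A define φ_a(Z) = a·Z·∏'_{λ ∈ a^{-1}L/L} (1 − Z/e_L(λ)). Then φ_a is a polynomial of degree q^(r·deg a) in Z. -/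
/-- If `L ⊂ ℂ_∞` is a discrete free `A`-module of rank `r` (`A = 𝔽_q[t]`) and
`a ∈ A` is nonzero, then `φ_a(Z) = a·Z·∏'_{λ ∈ a⁻¹L/L}(1 - Z/e_L(λ))` is a
polynomial of degree `q^(r·deg a)` in `Z`.  Here `R` is a set of representatives
of the nonzero cosets of `a⁻¹L/L`. -/
theorem stmt6 (Fq K : Type*) [Field Fq] [Fintype Fq] (q : ℕ) (hq : q = Fintype.card Fq)
    [NormedField K] [IsUltrametricDist K] [CompleteSpace K]
    [Algebra (Polynomial Fq) K]
    (L : Submodule (Polynomial Fq) K) (r : ℕ) (hr : 1 ≤ r)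
    (hfree : Nonempty (L ≃ₗ[Polynomial Fq] (Fin r → Polynomial Fq)))
    (hdisc : ∀ ρ : ℝ, {x : K | x ∈ L ∧ ‖x‖ ≤ ρ}.Finite)
    (eL : K → K) (heL : IsLatticeExp (L : Set K) eL)
    (hzero : ∀ x : K, eL x = 0 ↔ x ∈ L)
    (a : Polynomial Fq) (ha : a ≠ 0)
    (R : Finset K)
    (hR1 : ∀ ρ ∈ R, a • ρ ∈ L ∧ ρ ∉ L)
    (hR2 : ∀ x : K, a • x ∈ L → x ∉ L → ∃! ρ, ρ ∈ R ∧ x - ρ ∈ L) :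
    (Polynomial.C (algebraMap (Polynomial Fq) K a) * Polynomial.X *
        ∏ ρ ∈ R, (1 - Polynomial.C (eL ρ)⁻¹ * Polynomial.X)).natDegree
      = q ^ (r * a.natDegree) := by
  classical
  obtain ⟨f⟩ := hfree
  -- the image of `a` in `K` is nonzero
  have hainj : (algebraMap (Polynomial Fq) K) a ≠ 0 := by
    intro h
    have hv : f.symm (fun _ => 1) = (0 : L) → False := by
      intro h0
      have := congrArg f h0
      rw [LinearEquiv.apply_symm_apply, map_zero] at this
      have := congrFun this ⟨0, hr⟩
      simp at this
    apply hv
    have hsmul : a • f.symm (fun _ => (1 : Polynomial Fq)) = 0 := by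
      apply Subtype.ext
      show a • ((f.symm fun _ => (1 : Polynomial Fq) : L) : K) = 0
      rw [Algebra.smul_def, h, zero_mul]
    have := congrArg f hsmul
    rw [map_smul, map_zero, LinearEquiv.apply_symm_apply] at this
    have := congrFun this ⟨0, hr⟩
    simp only [Pi.smul_apply, smul_eq_mul, mul_one, Pi.zero_apply] at this
    exact absurd this ha
  -- key divisibility criterion
  have key : ∀ x : L, (∀ i, AdjoinRoot.mk a ((f x) i) = 0) ↔
      ∃ y ∈ L, (x : K) = a • y := by
    intro x
    constructor
    · intro h
      choose w hw using fun i => (AdjoinRoot.mk_eq_zero).mp (h i)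
      refine ⟨f.symm w, (f.symm w).2, ?_⟩
      have hx : x = a • f.symm w := by
        apply f.injective
        rw [map_smul, LinearEquiv.apply_symm_apply]
        funext i
        simpa [Pi.smul_apply, smul_eq_mul] using hw i
      rw [hx]; rfl
    · rintro ⟨y, hy, hxy⟩ i
      have hx : x = a • (⟨y, hy⟩ : L) := Subtype.ext hxy
      rw [hx, map_smul]
      simp only [Pi.smul_apply, smul_eq_mul]
      rw [AdjoinRoot.mk_eq_zero]
      exact dvd_mul_right a _
  -- cancel `a`
  have hcancel : ∀ x y : K, a • x = a • y → x = y := by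
    intro x y h
    rw [Algebra.smul_def, Algebra.smul_def] at h
    exact mul_left_cancel₀ hainj h
  -- the bijection ρ ↦ class of f(a•ρ)
  have hmem : ∀ ρ : R, a • (ρ : K) ∈ L := fun ρ => (hR1 ρ ρ.2).1
  let F : R → {w : Fin r → AdjoinRoot a // w ≠ 0} := fun ρ =>
    ⟨fun i => AdjoinRoot.mk a ((f ⟨a • (ρ : K), hmem ρ⟩) i), by
      intro h0
      obtain ⟨y, hy, hxy⟩ := (key _).mp (fun i => congrFun h0 i)
      exact (hR1 ρ ρ.2).2 (hcancel _ _ hxy ▸ hy)⟩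
  have hFinj : Function.Injective F := by
    intro ρ₁ ρ₂ h
    have h' : ∀ i, AdjoinRoot.mk a
        ((f (⟨a • (ρ₁ : K), hmem ρ₁⟩ - ⟨a • (ρ₂ : K), hmem ρ₂⟩)) i) = 0 := by
      intro i
      rw [map_sub]
      have hFe := congrFun (congrArg Subtype.val h) i
      simp only [F] at hFe
      rw [Pi.sub_apply, map_sub, hFe, sub_self]
    obtain ⟨y, hy, hxy⟩ := (key _).mp h'
    have hsub : (ρ₁ : K) - ρ₂ ∈ L := by
      have : a • ((ρ₁ : K) - ρ₂) = a • y := by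
        rw [smul_sub]; exact hxy
      rwa [hcancel _ _ this]
    obtain ⟨ρ, _, huniq⟩ := hR2 ρ₁ (hR1 ρ₁ ρ₁.2).1 (hR1 ρ₁ ρ₁.2).2
    have e1 : (ρ₁ : K) = ρ := huniq ρ₁ ⟨ρ₁.2, by simp⟩
    have e2 : (ρ₂ : K) = ρ := huniq ρ₂ ⟨ρ₂.2, hsub⟩
    exact Subtype.ext (e1.trans e2.symm)
  have hFsurj : Function.Surjective F := by
    rintro ⟨w, hw⟩
    choose v hv using fun i => AdjoinRoot.mk_surjective (w i)
    set y : L := f.symm v with hy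
    set x : K := ((algebraMap (Polynomial Fq) K) a)⁻¹ * (y : K) with hx
    have hax : a • x = (y : K) := by
      rw [Algebra.smul_def, hx, ← mul_assoc, mul_inv_cancel₀ hainj, one_mul]
    have haxL : a • x ∈ L := hax ▸ y.2
    have hxL : x ∉ L := by
      intro hxL
      apply hw
      funext i
      have : ∀ i, AdjoinRoot.mk a ((f y) i) = 0 :=
        (key y).mpr ⟨x, hxL, hax.symm⟩
      have hfv : f y = v := by rw [hy, LinearEquiv.apply_symm_apply]
      have := this i
      rw [hfv, hv i] at this
      simpa using this
    obtain ⟨ρ, ⟨hρR, hρL⟩, _⟩ := hR2 x haxL hxL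
    refine ⟨⟨ρ, hρR⟩, ?_⟩
    apply Subtype.ext
    funext i
    show AdjoinRoot.mk a ((f ⟨a • ρ, hmem ⟨ρ, hρR⟩⟩) i) = w i
    have hdecomp : (⟨a • ρ, hmem ⟨ρ, hρR⟩⟩ : L) = y - a • (⟨x - ρ, hρL⟩ : L) := by
      apply Subtype.ext
      show a • ρ = (y : K) - a • (x - ρ)
      rw [← hax, smul_sub]; ring
    rw [hdecomp, map_sub, map_smul]
    have hfv : f y = v := by rw [hy, LinearEquiv.apply_symm_apply]
    simp only [Pi.sub_apply, Pi.smul_apply, smul_eq_mul, map_sub, hfv, hv i]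
    rw [map_mul]
    simp [AdjoinRoot.mk_self]
  -- counting
  letI : Fintype (AdjoinRoot a) := Module.fintypeOfFintype (AdjoinRoot.powerBasis ha).basis
  have hcardQ : Fintype.card (AdjoinRoot a) = q ^ a.natDegree := by
    rw [Module.card_fintype (AdjoinRoot.powerBasis ha).basis, hq, Fintype.card_fin,
      AdjoinRoot.powerBasis_dim]
  have hcardR : R.card = q ^ (r * a.natDegree) - 1 := by
    have hEquiv := Equiv.ofBijective F ⟨hFinj, hFsurj⟩
    have h1 : Fintype.card {w : Fin r → AdjoinRoot a // w ≠ 0} =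
        Fintype.card (Fin r → AdjoinRoot a) - 1 := by
      have := Fintype.card_subtype_compl (fun w : Fin r → AdjoinRoot a => w = 0)
      simpa [Fintype.card_subtype_eq] using this
    have h2 : Fintype.card (Fin r → AdjoinRoot a) = q ^ (r * a.natDegree) := by
      rw [Fintype.card_fun, hcardQ, Fintype.card_fin, ← pow_mul, Nat.mul_comm]
    calc R.card = Fintype.card R := (Fintype.card_coe R).symm
      _ = Fintype.card {w : Fin r → AdjoinRoot a // w ≠ 0} := Fintype.card_congr hEquiv
      _ = q ^ (r * a.natDegree) - 1 := by rw [h1, h2]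
  -- degree computation
  have hfac : ∀ ρ ∈ R, (1 - Polynomial.C (eL ρ)⁻¹ * Polynomial.X : Polynomial K).natDegree = 1 := by
    intro ρ hρ
    have heρ : eL ρ ≠ 0 := fun h => (hR1 ρ hρ).2 ((hzero ρ).mp h)
    have hinv : (eL ρ)⁻¹ ≠ 0 := inv_ne_zero heρ
    rw [Polynomial.natDegree_sub_eq_right_of_natDegree_lt]
      <;> simp [Polynomial.natDegree_C_mul_X _ hinv]
  have hfacne : ∀ ρ ∈ R, (1 - Polynomial.C (eL ρ)⁻¹ * Polynomial.X : Polynomial K) ≠ 0 := by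
    intro ρ hρ h
    have := hfac ρ hρ
    rw [h] at this
    simp at this
  have hprodne : (∏ ρ ∈ R, (1 - Polynomial.C (eL ρ)⁻¹ * Polynomial.X : Polynomial K)) ≠ 0 :=
    Finset.prod_ne_zero_iff.mpr hfacne
  have hCXne : (Polynomial.C ((algebraMap (Polynomial Fq) K) a) * Polynomial.X : Polynomial K) ≠ 0 := by
    intro h
    have := Polynomial.natDegree_C_mul_X _ hainj
    rw [h] at this
    simp at this
  rw [Polynomial.natDegree_mul hCXne hprodne, Polynomial.natDegree_C_mul_X _ hainj,
    Polynomial.natDegree_prod _ _ hfacne, Finset.sum_congr rfl hfac, Finset.sum_const,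
    smul_eq_mul, mul_one, hcardR]
  have hpos : 1 ≤ q ^ (r * a.natDegree) := by
    have : 0 < q := hq ▸ Fintype.card_pos
    exact Nat.one_le_pow _ _ this
  omega
end

section
/- For a discrete rank-r A-lattice L in ℂ_∞, the polynomial φ_a(Z) = a·Z·∏'_{λ∈a^{-1}L/L}(1 − Z/e_L(λ)) satisfies the functional equation e_L(a·x) = φ_a(e_L(x)) for all x ∈ ℂ_∞. -/
open Polynomial in
private lemma zmodProdEval {K : Type*} [Field K] (p : ℕ) [Fact p.Prime] [CharP K p] (z : K) :
    ∏ c : ZMod p, (z - ZMod.castHom (dvd_refl p) K c) = z ^ p - z := by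
  have hp1 : 1 < p := (Fact.out : p.Prime).one_lt
  have hmonic : (X ^ p - X : (ZMod p)[X]).Monic := by
    apply (monic_X_pow p).sub_of_left
    rw [degree_X, degree_X_pow]
    exact_mod_cast hp1
  have hdeg : (X ^ p - X : (ZMod p)[X]).natDegree = p :=
    FiniteField.X_pow_card_sub_X_natDegree_eq _ hp1
  have hroots : (X ^ p - X : (ZMod p)[X]).roots = Finset.univ.val := by
    have := FiniteField.roots_X_pow_card_sub_X (ZMod p)
    rwa [ZMod.card p] at this
  have hsplits : Splits (X ^ p - X : (ZMod p)[X]) := by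
    rw [splits_iff_card_roots, hroots, hdeg]
    simpa using (ZMod.card p)
  have hP : (X ^ p - X : (ZMod p)[X]) = ∏ a : ZMod p, (X - C a) := by
    have h := hsplits.eq_prod_roots_of_monic hmonic
    rw [hroots] at h
    rw [h, Finset.prod_eq_multiset_prod]
  have : Polynomial.map (ZMod.castHom (dvd_refl p) K) (X ^ p - X : (ZMod p)[X]) =
      ∏ a : ZMod p, (X - C (ZMod.castHom (dvd_refl p) K a)) := by
    rw [hP, Polynomial.map_prod]
    simp
  calc ∏ c : ZMod p, (z - ZMod.castHom (dvd_refl p) K c)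
      = eval z (∏ a : ZMod p, (X - C (ZMod.castHom (dvd_refl p) K a))) := by
        rw [eval_prod]; simp
    _ = z ^ p - z := by rw [← this]; simp

open Finset in
private lemma finsetProdSubAdd {K : Type*} [Field K] (p : ℕ) [Fact p.Prime] [CharP K p] :
    ∀ n : ℕ, ∀ W : Finset K, W.card ≤ n → (0 : K) ∈ W →
      (∀ a ∈ W, ∀ b ∈ W, a - b ∈ W) →
      ∀ x y : K, ∏ v ∈ W, (x + y - v) = ∏ v ∈ W, (x - v) + ∏ v ∈ W, (y - v) := by
  classical
  intro n
  induction n with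
  | zero =>
    intro W hcard h0 _ x y
    have : W = ∅ := Finset.card_eq_zero.mp (Nat.le_zero.mp hcard)
    subst this
    exact absurd h0 (Finset.notMem_empty 0)
  | succ n ih =>
    intro W hcard h0 hsub x y
    have hadd : ∀ a ∈ W, ∀ b ∈ W, a + b ∈ W := by
      intro a ha b hb
      have := hsub a ha (0 - b) (hsub 0 h0 b hb)
      simpa [sub_sub_eq_add_sub] using this
    by_cases hW : ∀ v ∈ W, v = (0 : K)
    · have hWs : W = {0} := by
        apply Finset.eq_singleton_iff_unique_mem.mpr
        exact ⟨h0, hW⟩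
      simp [hWs]
    · push_neg at hW
      obtain ⟨w, hwW, hw0⟩ := hW
      set ζ : ZMod p →+* K := ZMod.castHom (dvd_refl p) K with hζ
      have hζinj : Function.Injective ζ := ζ.injective
      set PN : K → K := fun z => ∏ c : ZMod p, (z - ζ c * w) with hPN
      -- closed form
      have hform : ∀ z : K, PN z = w ^ p * ((z / w) ^ p - z / w) := by
        intro z
        have : ∀ c : ZMod p, z - ζ c * w = w * (z / w - ζ c) := by
          intro c; field_simp
        rw [hPN]
        simp only [this]
        rw [Finset.prod_mul_distrib, Finset.prod_const, card_univ, ZMod.card,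
          zmodProdEval p (z / w)]
      have hPNadd : ∀ u v : K, PN (u + v) = PN u + PN v := by
        intro u v
        simp only [hform, add_div]
        rw [add_pow_char]
        ring
      have hPNsub : ∀ u v : K, PN (u - v) = PN u - PN v := by
        intro u v
        have := hPNadd (u - v) v
        rw [sub_add_cancel] at this
        exact eq_sub_of_add_eq this.symm
      haveI : NeZero p := ⟨(Fact.out : p.Prime).ne_zero⟩
      have hPN0 : PN 0 = 0 := by
        apply Finset.prod_eq_zero (Finset.mem_univ (0 : ZMod p))
        simp
      have hroots : ∀ v : K, PN v = 0 ↔ ∃ c : ZMod p, v = ζ c * w := by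
        intro v
        rw [hPN]
        simp only [Finset.prod_eq_zero_iff, Finset.mem_univ, true_and, sub_eq_zero]
      have hnat : ∀ m : ℕ, (m : K) * w ∈ W := by
        intro m
        induction m with
        | zero => simpa using h0
        | succ m ihm =>
          push_cast
          rw [add_mul, one_mul]
          exact hadd _ ihm _ hwW
      have hNW : ∀ c : ZMod p, ζ c * w ∈ W := by
        intro c
        have : ζ c = ((c.val : ℕ) : K) := by
          rw [hζ, ZMod.castHom_apply, ← ZMod.natCast_val]
        rw [this]
        exact hnat c.val
      set W' : Finset K := W.image PN with hW'
      have h0' : (0 : K) ∈ W' := by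
        rw [hW', Finset.mem_image]
        exact ⟨0, h0, hPN0⟩
      have hsub' : ∀ a ∈ W', ∀ b ∈ W', a - b ∈ W' := by
        intro a ha b hb
        rw [hW', Finset.mem_image] at ha hb ⊢
        obtain ⟨a0, ha0, rfl⟩ := ha
        obtain ⟨b0, hb0, rfl⟩ := hb
        exact ⟨a0 - b0, hsub a0 ha0 b0 hb0, hPNsub a0 b0⟩
      have hcard' : W'.card ≤ n := by
        have hle : W'.card ≤ W.card := Finset.card_image_le
        have hne : W'.card ≠ W.card := by
          intro h
          have hinj := Finset.card_image_iff.mp (hW' ▸ h)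
          have : w = 0 := hinj hwW h0 (by rw [hPN0]; exact (hroots w).mpr ⟨1, by simp⟩)
          exact hw0 this
        omega
      have step1 : ∀ z : K, ∏ v ∈ W, (z - v) = ∏ u ∈ W', (PN z - u) := by
        intro z
        rw [← Finset.prod_fiberwise_of_maps_to (g := PN) (t := W')
          (fun v hv => Finset.mem_image_of_mem _ hv) (fun v => z - v)]
        refine Finset.prod_congr rfl fun u hu => ?_
        obtain ⟨v0, hv0W, hv0⟩ := Finset.mem_image.mp hu
        have hfib : W.filter (fun v => PN v = u) =
            Finset.univ.image (fun c : ZMod p => v0 + ζ c * w) := by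
          ext v
          simp only [Finset.mem_filter, Finset.mem_image, Finset.mem_univ, true_and]
          constructor
          · rintro ⟨hvW, hPNv⟩
            have : PN (v - v0) = 0 := by rw [hPNsub, hPNv, hv0, sub_self]
            obtain ⟨c, hc⟩ := (hroots _).mp this
            exact ⟨c, by rw [← hc]; ring⟩
          · rintro ⟨c, rfl⟩
            refine ⟨hadd _ hv0W _ (hNW c), ?_⟩
            rw [hPNadd, hv0]
            have : PN (ζ c * w) = 0 := (hroots _).mpr ⟨c, rfl⟩
            rw [this, add_zero]
        rw [hfib, Finset.prod_image]
        · have : ∀ c : ZMod p, z - (v0 + ζ c * w) = (z - v0) - ζ c * w := by intro c; ring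
          simp only [this]
          have : ∏ c : ZMod p, (z - v0 - ζ c * w) = PN (z - v0) := rfl
          rw [this, hPNsub, hv0]
        · intro c _ c' _ hcc
          have : ζ c * w = ζ c' * w := by
            have := hcc
            simpa [add_right_inj] using this
          exact hζinj (mul_right_cancel₀ hw0 this)
      rw [step1 (x + y), step1 x, step1 y, hPNadd]
      exact ih W' hcard' h0' hsub' (PN x) (PN y)

open Filter Topology in
private lemma eL_add {Fq K : Type*} [Field Fq] [Fintype Fq] [NormedField K]
    [IsUltrametricDist K] [Algebra (Polynomial Fq) K]
    (L : Submodule (Polynomial Fq) K)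
    (hdisc : ∀ ρ : ℝ, {x : K | x ∈ L ∧ ‖x‖ ≤ ρ}.Finite)
    (eL : K → K) (heL : IsLatticeExp (L : Set K) eL) (x y : K) :
    eL (x + y) = eL x + eL y := by
  classical
  choose pr hprod heq using heL
  -- characteristic
  set p := ringChar Fq with hp
  haveI hFq : CharP Fq p := ringChar.charP Fq
  haveI hFp : Fact p.Prime := ⟨CharP.char_is_prime Fq p⟩
  have hinj : Function.Injective
      ((algebraMap (Polynomial Fq) K).comp (Polynomial.C : Fq →+* Polynomial Fq)) :=
    RingHom.injective _
  haveI : CharP K p := charP_of_injective_ringHom hinj p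
  -- exhausting finite subsets
  set S0 := {l : K // l ∈ (L : Set K) ∧ l ≠ 0} with hS0
  let V : ℕ → Finset S0 := fun n => ((hdisc n).toFinset.subtype _)
  have hVmem : ∀ (n : ℕ) (l : S0), l ∈ V n ↔ ‖(l : K)‖ ≤ (n : ℝ) := by
    intro n l
    show l ∈ Finset.subtype _ _ ↔ _
    rw [Finset.mem_subtype, Set.Finite.mem_toFinset]
    exact ⟨fun h => h.2, fun h => ⟨l.2.1, h⟩⟩
  have hVmono : Monotone V := by
    intro n m hnm l hl
    rw [hVmem] at hl ⊢
    exact hl.trans (by exact_mod_cast hnm)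
  have hVtop : Tendsto V atTop atTop := by
    apply Filter.tendsto_atTop_finset_of_monotone hVmono
    intro l
    obtain ⟨n, hn⟩ := exists_nat_ge ‖(l : K)‖
    exact ⟨n, (hVmem n l).mpr hn⟩
  have hlim : ∀ z : K,
      Tendsto (fun n => z * ∏ l ∈ V n, (1 - z / (l : K))) atTop (𝓝 (eL z)) := by
    intro z
    have h1 : Tendsto (fun n => ∏ l ∈ V n, (1 - z / (l : K))) atTop (𝓝 (pr z)) :=
      (hprod z).comp hVtop
    rw [heq z]
    exact h1.const_mul z
  -- the finite sets in K
  let W : ℕ → Finset K := fun n => insert (0 : K) ((V n).image Subtype.val)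
  have hWmem : ∀ (n : ℕ) (v : K), v ∈ W n ↔ v ∈ L ∧ ‖v‖ ≤ (n : ℝ) := by
    intro n v
    simp only [W, Finset.mem_insert, Finset.mem_image]
    constructor
    · rintro (rfl | ⟨l, hl, rfl⟩)
      · exact ⟨L.zero_mem, by simp⟩
      · exact ⟨l.2.1, (hVmem n l).mp hl⟩
    · rintro ⟨hvL, hvn⟩
      by_cases hv : v = 0
      · exact Or.inl hv
      · exact Or.inr ⟨⟨v, hvL, hv⟩, (hVmem n _).mpr hvn, rfl⟩
  have h0W : ∀ n, (0 : K) ∈ W n := fun n => Finset.mem_insert_self _ _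
  have hsubW : ∀ n, ∀ a ∈ W n, ∀ b ∈ W n, a - b ∈ W n := by
    intro n a ha b hb
    rw [hWmem] at ha hb ⊢
    refine ⟨L.sub_mem ha.1 hb.1, ?_⟩
    calc ‖a - b‖ = ‖a + (-b)‖ := by rw [sub_eq_add_neg]
      _ ≤ max ‖a‖ ‖-b‖ := IsUltrametricDist.norm_add_le_max a (-b)
      _ ≤ (n : ℝ) := by rw [norm_neg]; exact max_le ha.2 hb.2
  -- rewrite partial products via W
  have hEn : ∀ (z : K) (n : ℕ),
      z * ∏ l ∈ V n, (1 - z / (l : K)) =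
        (∏ l ∈ V n, (-((l : K))⁻¹)) * ∏ v ∈ W n, (z - v) := by
    intro z n
    have h0notin : (0 : K) ∉ (V n).image Subtype.val := by
      simp only [Finset.mem_image, not_exists]
      rintro l ⟨hl, h0⟩
      exact l.2.2 h0
    have himg : ∏ v ∈ (V n).image Subtype.val, (z - v) = ∏ l ∈ V n, (z - (l : K)) :=
      Finset.prod_image (fun a _ b _ h => Subtype.ext h)
    have hfactor : ∀ l ∈ V n, (1 - z / (l : K)) = (-((l : K))⁻¹) * (z - (l : K)) := by
      intro l _
      have : (l : K) ≠ 0 := l.2.2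
      field_simp
      ring
    rw [Finset.prod_congr rfl hfactor, Finset.prod_mul_distrib]
    simp only [W]
    rw [Finset.prod_insert h0notin, himg, sub_zero]
    ring
  -- conclude
  have hfinal : Tendsto (fun n => (x + y) * ∏ l ∈ V n, (1 - (x + y) / (l : K)))
      atTop (𝓝 (eL x + eL y)) := by
    have hx := hlim x
    have hy := hlim y
    have := hx.add hy
    apply this.congr
    intro n
    rw [hEn x n, hEn y n, hEn (x + y) n, ← mul_add]
    congr 1
    exact (finsetProdSubAdd p (W n).card (W n) le_rfl (h0W n) (hsubW n) x y).symm
  exact tendsto_nhds_unique (hlim (x + y)) hfinal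

private lemma hasProdFinsetProd {γ β α : Type*} [CommMonoid α] [TopologicalSpace α]
    [ContinuousMul α] (s : Finset γ) (g : γ → β → α) (c : γ → α)
    (h : ∀ i ∈ s, HasProd (g i) (c i)) :
    HasProd (fun b => ∏ i ∈ s, g i b) (∏ i ∈ s, c i) := by
  classical
  induction s using Finset.induction_on with
  | empty => simpa using hasProd_one
  | @insert i s hnotin ih =>
    have h1 := h i (Finset.mem_insert_self i s)
    have h2 := ih (fun j hj => h j (Finset.mem_insert_of_mem hj))
    have h3 := h1.mul h2
    have hfun : (fun b => ∏ j ∈ insert i s, g j b) = fun b => g i b * ∏ j ∈ s, g j b := by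
      funext b; rw [Finset.prod_insert hnotin]
    rw [Finset.prod_insert hnotin, hfun]
    exact h3

/-- If `L ⊂ ℂ_∞` is a discrete free `A`-module of rank `r` (`A = 𝔽_q[t]`) and
`a ∈ A` is nonzero, then `φ_a(Z) = a·Z·∏'_{λ ∈ a⁻¹L/L}(1 - Z/e_L(λ))` is a
polynomial satisfying the functional equation `e_L(a·x) = φ_a(e_L(x))` for all `x`.
Here `R` is a set of representatives of the nonzero cosets of `a⁻¹L/L`. -/
theorem stmt7 (Fq K : Type*) [Field Fq] [Fintype Fq] (q : ℕ) (hq : q = Fintype.card Fq)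
    [NormedField K] [IsUltrametricDist K] [CompleteSpace K]
    [Algebra (Polynomial Fq) K]
    (L : Submodule (Polynomial Fq) K) (r : ℕ) (hr : 1 ≤ r)
    (hfree : Nonempty (L ≃ₗ[Polynomial Fq] (Fin r → Polynomial Fq)))
    (hdisc : ∀ ρ : ℝ, {x : K | x ∈ L ∧ ‖x‖ ≤ ρ}.Finite)
    (eL : K → K) (heL : IsLatticeExp (L : Set K) eL)
    (hzero : ∀ x : K, eL x = 0 ↔ x ∈ L)
    (a : Polynomial Fq) (ha : a ≠ 0)
    (R : Finset K)
    (hR1 : ∀ ρ ∈ R, a • ρ ∈ L ∧ ρ ∉ L)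
    (hR2 : ∀ x : K, a • x ∈ L → x ∉ L → ∃! ρ, ρ ∈ R ∧ x - ρ ∈ L) :
    ∀ x : K,
      eL (a • x) = Polynomial.eval (eL x)
        (Polynomial.C (algebraMap (Polynomial Fq) K a) * Polynomial.X *
          ∏ ρ ∈ R, (1 - Polynomial.C (eL ρ)⁻¹ * Polynomial.X)) := by
  classical
  intro x
  obtain ⟨pr, hpr⟩ := Classical.axiomOfChoice heL
  have hprod : ∀ z : K, HasProd
      (fun l : {l : K // l ∈ (L : Set K) ∧ l ≠ 0} => 1 - z / (l : K)) (pr z) :=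
    fun z => (hpr z).1
  have heq : ∀ z : K, eL z = z * pr z := fun z => (hpr z).2
  set aK : K := algebraMap (Polynomial Fq) K a with haK
  have hsmul : ∀ z : K, a • z = aK * z := fun z => Algebra.smul_def a z
  -- simplify polynomial evaluation
  rw [Polynomial.eval_mul, Polynomial.eval_mul, Polynomial.eval_C, Polynomial.eval_X,
    Polynomial.eval_prod]
  simp only [Polynomial.eval_sub, Polynomial.eval_one, Polynomial.eval_mul,
    Polynomial.eval_C, Polynomial.eval_X]
  have heL0 : eL 0 = 0 := by rw [heq 0, zero_mul]
  by_cases haK0 : aK = 0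
  · rw [hsmul, haK0, zero_mul, heL0, zero_mul, zero_mul]
  · have haKne : aK ≠ 0 := haK0
    have hadd : ∀ u v : K, eL (u + v) = eL u + eL v := fun u v => eL_add L hdisc eL heL u v
    have hneg : ∀ z : K, eL (-z) = - eL z := by
      intro z
      have h := hadd z (-z)
      rw [add_neg_cancel, heL0] at h
      exact (neg_eq_of_add_eq_zero_right h.symm).symm
    have hsub : ∀ u v : K, eL (u - v) = eL u - eL v := by
      intro u v
      rw [sub_eq_add_neg, hadd, hneg, ← sub_eq_add_neg]
    set F : K → K := fun μ => 1 - x / μ with hF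
    set T : Set K := {μ : K | a • μ ∈ L ∧ μ ≠ 0} with hT
    -- (1) the total product over T
    let e1 : {l : K // l ∈ (L : Set K) ∧ l ≠ 0} ≃ ↥T :=
      { toFun := fun l => ⟨(l : K) / aK, by
          refine ⟨?_, div_ne_zero l.2.2 haKne⟩
          show a • ((l : K) / aK) ∈ L
          rw [hsmul, mul_div_cancel₀ _ haKne]
          exact l.2.1⟩
        invFun := fun μ => ⟨aK * (μ : K), by
          refine ⟨?_, mul_ne_zero haKne μ.2.2⟩
          show aK * (μ : K) ∈ L
          rw [← hsmul]
          exact μ.2.1⟩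
        left_inv := fun l => by
          ext
          show aK * ((l : K) / aK) = (l : K)
          rw [mul_div_cancel₀ _ haKne]
        right_inv := fun μ => by
          ext
          show aK * (μ : K) / aK = (μ : K)
          rw [mul_comm, mul_div_assoc, div_self haKne, mul_one] }
    have h1 : HasProd (T.mulIndicator F) (pr (a • x)) := by
      rw [← hasProd_subtype_iff_mulIndicator]
      have hfun : (fun l : {l : K // l ∈ (L : Set K) ∧ l ≠ 0} => 1 - (a • x) / (l : K))
          = (F ∘ (↑)) ∘ ⇑e1 := by
        funext l
        simp only [Function.comp_apply, hF]
        show 1 - (a • x) / (l : K) = 1 - x / ((l : K) / aK)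
        rw [hsmul, div_div_eq_mul_div, mul_comm]
      exact e1.hasProd_iff.mp (hfun ▸ hprod (a • x))
    -- (2) product over nonzero lattice points
    have h2 : HasProd (({μ : K | μ ∈ L ∧ μ ≠ 0}).mulIndicator F) (pr x) := by
      rw [← hasProd_subtype_iff_mulIndicator]
      exact hprod x
    -- (3) products over the cosets
    set Co : K → Set K := fun ρ => {μ : K | μ - ρ ∈ L} with hCo
    have h3 : ∀ ρ ∈ R, HasProd ((Co ρ).mulIndicator F)
        ((1 - x / ρ) * (pr (ρ - x) * (pr ρ)⁻¹)) := by
      intro ρ hρR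
      have hρL : ρ ∉ L := (hR1 ρ hρR).2
      have hρ0 : ρ ≠ 0 := fun h => hρL (h ▸ L.zero_mem)
      have heLρne : eL ρ ≠ 0 := fun h => hρL ((hzero ρ).mp h)
      have hprρ : pr ρ ≠ 0 := by
        intro h
        apply heLρne
        rw [heq ρ, h, mul_zero]
      have hinv : HasProd
          (fun l : {l : K // l ∈ (L : Set K) ∧ l ≠ 0} => (1 - ρ / (l : K))⁻¹) (pr ρ)⁻¹ := by
        have h := Filter.Tendsto.inv₀ (hprod ρ) hprρ
        show Filter.Tendsto
          (fun s : Finset {l : K // l ∈ (L : Set K) ∧ l ≠ 0} =>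
            ∏ l ∈ s, (1 - ρ / (l : K))⁻¹) Filter.atTop (nhds (pr ρ)⁻¹)
        have hfun : (fun s : Finset {l : K // l ∈ (L : Set K) ∧ l ≠ 0} =>
            ∏ l ∈ s, (1 - ρ / (l : K))⁻¹)
            = fun s : Finset {l : K // l ∈ (L : Set K) ∧ l ≠ 0} =>
              (∏ l ∈ s, (1 - ρ / (l : K)))⁻¹ := by
          funext s
          rw [Finset.prod_inv_distrib]
        rw [hfun]
        exact h
      have hAB : HasProd (fun l : {l : K // l ∈ (L : Set K) ∧ l ≠ 0} =>
          (1 - (ρ - x) / (l : K)) * (1 - ρ / (l : K))⁻¹) (pr (ρ - x) * (pr ρ)⁻¹) :=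
        (hprod (ρ - x)).mul hinv
      have hfact : (fun l : {l : K // l ∈ (L : Set K) ∧ l ≠ 0} =>
          (1 - (ρ - x) / (l : K)) * (1 - ρ / (l : K))⁻¹)
          = fun l : {l : K // l ∈ (L : Set K) ∧ l ≠ 0} => 1 - x / (ρ - (l : K)) := by
        funext l
        have hl0 : (l : K) ≠ 0 := l.2.2
        have hlρ : (l : K) - ρ ≠ 0 := by
          rw [sub_ne_zero]
          intro h
          exact hρL (h ▸ l.2.1)
        have hρl : ρ - (l : K) ≠ 0 := by
          rw [sub_ne_zero]
          intro h
          exact hρL (h ▸ l.2.1)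
        have hd : 1 - ρ / (l : K) ≠ 0 := by
          rw [sub_ne_zero]
          intro h
          apply hlρ
          field_simp at h
          rw [h]
          ring
        field_simp
        ring
      have hB : HasProd (fun l : {l : K // l ∈ (L : Set K) ∧ l ≠ 0} =>
          1 - x / (ρ - (l : K))) (pr (ρ - x) * (pr ρ)⁻¹) := hfact ▸ hAB
      let e2 : {l : K // l ∈ (L : Set K) ∧ l ≠ 0} ≃ ↥(Co ρ \ {ρ} : Set K) :=
        { toFun := fun l => ⟨ρ - (l : K), by
            constructor
            · show (ρ - (l : K)) - ρ ∈ L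
              have : (ρ - (l : K)) - ρ = -(l : K) := by ring
              rw [this]
              exact L.neg_mem l.2.1
            · simp only [Set.mem_singleton_iff]
              intro h
              apply l.2.2
              have : (l : K) = ρ - (ρ - (l:K)) := by ring
              rw [this, h, sub_self]⟩
          invFun := fun μ => ⟨ρ - (μ : K), by
            constructor
            · show ρ - (μ : K) ∈ L
              have h := μ.2.1
              have hm : (μ : K) - ρ ∈ L := h
              have : ρ - (μ : K) = -((μ : K) - ρ) := by ring
              rw [this]
              exact L.neg_mem hm
            · intro h
              apply μ.2.2
              simp only [Set.mem_singleton_iff]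
              have : (μ : K) = ρ - (ρ - (μ : K)) := by ring
              rw [this, h, sub_zero]⟩
          left_inv := fun l => by ext; show ρ - (ρ - (l : K)) = (l : K); ring
          right_inv := fun μ => by ext; show ρ - (ρ - (μ : K)) = (μ : K); ring }
      have h3a : HasProd ((Co ρ \ {ρ} : Set K).mulIndicator F) (pr (ρ - x) * (pr ρ)⁻¹) := by
        rw [← hasProd_subtype_iff_mulIndicator]
        have hfun2 : (fun l : {l : K // l ∈ (L : Set K) ∧ l ≠ 0} => 1 - x / (ρ - (l : K)))
            = (F ∘ (↑)) ∘ ⇑e2 := by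
          funext l
          simp only [Function.comp_apply, hF]
          show 1 - x / (ρ - (l : K)) = 1 - x / (ρ - (l : K))
          rfl
        exact e2.hasProd_iff.mp (hfun2 ▸ hB)
      have hsingle : HasProd (({ρ} : Set K).mulIndicator F) (1 - x / ρ) := by
        have hind : ({ρ} : Set K).mulIndicator F = fun μ => if μ = ρ then 1 - x / ρ else 1 := by
          funext μ
          by_cases h : μ = ρ <;> simp [Set.mulIndicator, h, hF]
        rw [hind]
        exact hasProd_ite_eq ρ (1 - x / ρ)
      have hunion : (Co ρ).mulIndicator F
          = fun μ => (({ρ} : Set K).mulIndicator F μ) * ((Co ρ \ {ρ} : Set K).mulIndicator F μ) := by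
        funext μ
        by_cases h : μ = ρ
        · have hμC : μ ∈ Co ρ := by
            show μ - ρ ∈ L
            rw [h, sub_self]
            exact L.zero_mem
          have hμs : μ ∈ ({ρ} : Set K) := by simpa using h
          have hμd : μ ∉ (Co ρ \ {ρ} : Set K) := by simp [h]
          rw [Set.mulIndicator_of_mem hμC, Set.mulIndicator_of_mem hμs,
            Set.mulIndicator_of_notMem hμd, mul_one]
        · by_cases h2 : μ ∈ Co ρ
          · rw [Set.mulIndicator_of_mem h2, Set.mulIndicator_of_notMem (by simpa using h),
              Set.mulIndicator_of_mem (Set.mem_diff_of_mem h2 (by simpa using h)), one_mul]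
          · rw [Set.mulIndicator_of_notMem h2, Set.mulIndicator_of_notMem (by simpa using h),
              Set.mulIndicator_of_notMem (fun hc => h2 hc.1), one_mul]
      rw [hunion]
      exact hsingle.mul h3a
    -- (4) splitting of the indicator of T
    have h4 : T.mulIndicator F = fun μ =>
        (({μ : K | μ ∈ L ∧ μ ≠ 0}).mulIndicator F μ) * ∏ ρ ∈ R, (Co ρ).mulIndicator F μ := by
      funext μ
      by_cases hμT : μ ∈ T
      · rw [Set.mulIndicator_of_mem hμT]
        obtain ⟨hμaL, hμ0⟩ := hμT
        by_cases hμL : μ ∈ L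
        · have hμSL : μ ∈ {μ : K | μ ∈ L ∧ μ ≠ 0} := ⟨hμL, hμ0⟩
          rw [Set.mulIndicator_of_mem hμSL]
          have hall : ∀ ρ ∈ R, (Co ρ).mulIndicator F μ = 1 := by
            intro ρ hρR
            apply Set.mulIndicator_of_notMem
            intro hc
            apply (hR1 ρ hρR).2
            have : ρ = μ - (μ - ρ) := by ring
            rw [this]
            exact L.sub_mem hμL hc
          rw [Finset.prod_congr rfl hall, Finset.prod_const_one, mul_one]
        · obtain ⟨ρ0, ⟨hρ0R, hρ0L⟩, huniq⟩ := hR2 μ hμaL hμL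
          have hμSL : μ ∉ {μ : K | μ ∈ L ∧ μ ≠ 0} := fun hc => hμL hc.1
          rw [Set.mulIndicator_of_notMem hμSL, one_mul]
          rw [Finset.prod_eq_single ρ0 ?_ ?_]
          · have hμC : μ ∈ Co ρ0 := by
              show μ - ρ0 ∈ L
              exact hρ0L
            exact (Set.mulIndicator_of_mem hμC F).symm
          · intro ρ hρR hρne
            apply Set.mulIndicator_of_notMem
            intro hc
            exact hρne (huniq ρ ⟨hρR, hc⟩)
          · intro hc
            exact absurd hρ0R hc
      · rw [Set.mulIndicator_of_notMem hμT]
        have hnL : μ ∉ {μ : K | μ ∈ L ∧ μ ≠ 0} := by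
          intro hc
          exact hμT ⟨L.smul_mem a hc.1, hc.2⟩
        rw [Set.mulIndicator_of_notMem hnL, one_mul]
        
        symm
        apply Finset.prod_eq_one
        intro ρ hρR
        apply Set.mulIndicator_of_notMem
        intro hc
        apply hμT
        constructor
        · have hμρ : μ - ρ ∈ L := hc
          have : a • μ = a • (μ - ρ) + a • ρ := by rw [← smul_add]; ring_nf
          rw [this]
          exact L.add_mem (L.smul_mem a hμρ) (hR1 ρ hρR).1
        · intro h0
          apply (hR1 ρ hρR).2
          have hμρ : μ - ρ ∈ L := hc
          rw [h0] at hμρ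
          have : ρ = -(0 - ρ) := by ring
          rw [this]
          exact L.neg_mem hμρ
    -- (5) combine
    have h5 : HasProd (T.mulIndicator F)
        (pr x * ∏ ρ ∈ R, ((1 - x / ρ) * (pr (ρ - x) * (pr ρ)⁻¹))) := by
      rw [h4]
      exact h2.mul (hasProdFinsetProd R _ _ h3)
    have h6 : pr (a • x) = pr x * ∏ ρ ∈ R, ((1 - x / ρ) * (pr (ρ - x) * (pr ρ)⁻¹)) :=
      h1.unique h5
    -- (6) final computation
    have hterm : ∀ ρ ∈ R, (1 - x / ρ) * (pr (ρ - x) * (pr ρ)⁻¹) = 1 - (eL ρ)⁻¹ * eL x := by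
      intro ρ hρR
      have hρL : ρ ∉ L := (hR1 ρ hρR).2
      have hρ0 : ρ ≠ 0 := fun h => hρL (h ▸ L.zero_mem)
      have heLρne : eL ρ ≠ 0 := fun h => hρL ((hzero ρ).mp h)
      have hprρ : pr ρ ≠ 0 := by
        intro h
        apply heLρne
        rw [heq ρ, h, mul_zero]
      have hex : (ρ - x) * pr (ρ - x) = eL ρ - eL x := by
        rw [← heq (ρ - x)]
        exact hsub ρ x
      have h7 : (1 - x / ρ) * (pr (ρ - x) * (pr ρ)⁻¹) = (eL ρ - eL x) / eL ρ := by
        rw [← hex, heq ρ]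
        field_simp
      rw [h7]
      field_simp
    rw [heq (a • x), h6, Finset.prod_congr rfl hterm, hsmul x, heq x]
    ring
end
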